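/- arXiv:1908.09952 — 3 statements merged into one kernel-verified Lean document; each statement's English description precedes it below -/
import Mathlib

section
/- Let β(s) = (x(s), 0, z(s)) be an arc-length parametrized profile curve with x > 0 generating a surface of revolution Σ. Suppose: (a) −1 ≤ x''(s)(x(s) − (x'(s)/z'(s))z(s)) whenever z'(s) ≠ 0; (b) −1 ≤ z(s)z''(s) whenever z'(s) = 0; and (c) −x(s)x'(s)² ≤ z'(s)x'(s)z(s) for all s. Then both eigenvalues λ₁ = 1 + k₁⟨p,N⟩ and λ₂ = 1 + k₂⟨p,N⟩ of Hess_Σ(|p|²/2) are nonnegative, and hence Σ satisfies |Φ|²⟨p,N⟩² ≤ ½(2 + H⟨p,N⟩)² along the profile curve. -/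
/-- Sufficient conditions for the pinching inequality on a surface of revolution: if the
arc-length profile curve `(x, z)` with `x > 0` satisfies
(a) `−1 ≤ x''(x − (x'/z')z)` wherever `z' ≠ 0`, (b) `−1 ≤ z z''` wherever `z' = 0`, and
(c) `−x x'² ≤ z' x' z` everywhere, then both Hessian eigenvalues
`λ₁ = 1 + k₁⟨p,N⟩`, `λ₂ = 1 + k₂⟨p,N⟩` are nonnegative, hence
`|Φ|²⟨p,N⟩² ≤ ½(2 + H⟨p,N⟩)²` along the profile, where `k₁ = x'z'' − x''z'`,
`k₂ = z'/x`, `⟨p,N⟩ = x'z − xz'`, `H = k₁ + k₂` and `|Φ|² = (k₁ − k₂)²/2`. -/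
theorem stmt6 (x z x' z' x'' z'' : ℝ → ℝ)
    (hx : ∀ s, HasDerivAt x (x' s) s) (hx' : ∀ s, HasDerivAt x' (x'' s) s)
    (hz : ∀ s, HasDerivAt z (z' s) s) (hz' : ∀ s, HasDerivAt z' (z'' s) s)
    (harc : ∀ s, x' s ^ 2 + z' s ^ 2 = 1) (hxpos : ∀ s, 0 < x s)
    (ha : ∀ s, z' s ≠ 0 → -1 ≤ x'' s * (x s - (x' s / z' s) * z s))
    (hb : ∀ s, z' s = 0 → -1 ≤ z s * z'' s)
    (hc : ∀ s, -(x s * x' s ^ 2) ≤ z' s * x' s * z s) :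
    ∀ s : ℝ,
      0 ≤ 1 + (x' s * z'' s - x'' s * z' s) * (x' s * z s - x s * z' s) ∧
      0 ≤ 1 + (z' s / x s) * (x' s * z s - x s * z' s) ∧
      ((x' s * z'' s - x'' s * z' s) - z' s / x s) ^ 2 / 2 *
          (x' s * z s - x s * z' s) ^ 2 ≤
        (1 / 2) * (2 + ((x' s * z'' s - x'' s * z' s) + z' s / x s) *
          (x' s * z s - x s * z' s)) ^ 2 := by
  intro s
  -- derivative of arc-length relation
  have hconst : HasDerivAt (fun t => x' t ^ 2 + z' t ^ 2) (0 : ℝ) s := by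
    have : (fun t => x' t ^ 2 + z' t ^ 2) = fun _ => (1 : ℝ) := funext harc
    rw [this]; exact hasDerivAt_const s 1
  have hderiv : HasDerivAt (fun t => x' t ^ 2 + z' t ^ 2)
      (2 * x' s * x'' s + 2 * z' s * z'' s) s := by
    have h1 := ((hx' s).fun_pow 2)
    have h2 := ((hz' s).fun_pow 2)
    have := h1.fun_add h2
    simpa [mul_comm, mul_assoc, mul_left_comm] using this
  have hrel : x' s * x'' s + z' s * z'' s = 0 := by
    have := hconst.unique hderiv
    linarith
  have hxs := hxpos s
  have harcs := harc s
  have hcs := hc s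
  -- lambda2 nonneg
  have hq : z' s / x s * x s = z' s := div_mul_cancel₀ _ (ne_of_gt hxs)
  have hl2 : 0 ≤ 1 + (z' s / x s) * (x' s * z s - x s * z' s) := by
    have h : 0 ≤ x s + z' s * (x' s * z s - x s * z' s) := by nlinarith [hcs, harcs]
    have heq : 1 + z' s / x s * (x' s * z s - x s * z' s)
        = (x s + z' s * (x' s * z s - x s * z' s)) / x s := by
      field_simp
    rw [heq]; exact div_nonneg h hxs.le
  have hl1 : 0 ≤ 1 + (x' s * z'' s - x'' s * z' s) * (x' s * z s - x s * z' s) := by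
    by_cases hz0 : z' s = 0
    · have hx'2 : x' s ^ 2 = 1 := by rw [← harcs, hz0]; ring
      have hx''0 : x'' s = 0 := by
        have hx'ne : x' s ≠ 0 := by intro h; rw [h] at hx'2; norm_num at hx'2
        have : x' s * x'' s = 0 := by rw [hz0] at hrel; linarith
        exact (mul_eq_zero.mp this).resolve_left hx'ne
      have hbs := hb s hz0
      rw [hz0, hx''0]
      nlinarith
    · have has := ha s hz0
      have hz'' : z'' s = -(x' s * x'' s) / z' s := by
        field_simp
        linarith
      have key : (x' s * z'' s - x'' s * z' s) * (x' s * z s - x s * z' s)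
          = x'' s * (x s - (x' s / z' s) * z s) := by
        rw [hz'']
        field_simp
        linear_combination x'' s * (x s * z' s - x' s * z s) * harcs
      rw [key]; linarith
  refine ⟨hl1, hl2, ?_⟩
  nlinarith [mul_nonneg hl1 hl2]
end

section
/- Fix 0 < B < 1 and H > 0, and set z₀ = (1−B²)/(HB). If the unduloid profile functions satisfy z(s₀) < z₀, where s₀ = (1/H)sin⁻¹(−B) + 3π/(2H), then g(s) = x(s) − (x'(s)/z'(s))z(s) > 0 for all s ∈ (0, s₀). -/
open Real Set

/-- The unduloid profile: radial coordinate. -/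
noncomputable def ux (H B : ℝ) (s : ℝ) : ℝ :=
  (1 / H) * Real.sqrt (1 + B ^ 2 + 2 * B * Real.sin (H * s + 3 * π / 2))

/-- The unduloid profile: height coordinate. -/
noncomputable def uz (H B : ℝ) (s : ℝ) : ℝ :=
  ∫ t in (3 * π / (2 * H))..(s + 3 * π / (2 * H)),
    (1 + B * Real.sin (H * t)) / Real.sqrt (1 + B ^ 2 + 2 * B * Real.sin (H * t))

/-- The first positive zero of `x''` for the unduloid. -/
noncomputable def us₀ (H B : ℝ) : ℝ := (1 / H) * Real.arcsin (-B) + 3 * π / (2 * H)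

/-- The function `g(s) = x(s) − (x'(s)/z'(s))z(s)` for the unduloid. -/
noncomputable def ug (H B : ℝ) (s : ℝ) : ℝ :=
  ux H B s - (deriv (ux H B) s / deriv (uz H B) s) * uz H B s

noncomputable def uS (H : ℝ) (s : ℝ) : ℝ := Real.sin (H * s + 3 * π / 2)
noncomputable def uC (H : ℝ) (s : ℝ) : ℝ := Real.cos (H * s + 3 * π / 2)
noncomputable def uQ (H B : ℝ) (s : ℝ) : ℝ := 1 + B ^ 2 + 2 * B * uS H s
noncomputable def uf (H B : ℝ) (t : ℝ) : ℝ :=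
  (1 + B * Real.sin (H * t)) / Real.sqrt (1 + B ^ 2 + 2 * B * Real.sin (H * t))

lemma uQ_pos {H B : ℝ} (hB0 : 0 < B) (hB1 : B < 1) (s : ℝ) : 0 < uQ H B s := by
  have h1 := Real.neg_one_le_sin (H * s + 3 * π / 2)
  have h2 := Real.sin_le_one (H * s + 3 * π / 2)
  unfold uQ uS
  nlinarith [sq_nonneg (1 - B)]

lemma uden_pos {H B : ℝ} (hB0 : 0 < B) (hB1 : B < 1) (s : ℝ) : 0 < 1 + B * uS H s := by
  have h1 := Real.neg_one_le_sin (H * s + 3 * π / 2)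
  unfold uS
  nlinarith

lemma hasDerivAt_uS (H : ℝ) (s : ℝ) : HasDerivAt (uS H) (uC H s * H) s := by
  have h1 : HasDerivAt (fun s : ℝ => H * s + 3 * π / 2) H s := by
    simpa using ((hasDerivAt_id s).const_mul H).add_const (3 * π / 2)
  exact h1.sin

lemma hasDerivAt_uC (H : ℝ) (s : ℝ) : HasDerivAt (uC H) (-(uS H s) * H) s := by
  have h1 : HasDerivAt (fun s : ℝ => H * s + 3 * π / 2) H s := by
    simpa using ((hasDerivAt_id s).const_mul H).add_const (3 * π / 2)
  exact h1.cos

lemma hasDerivAt_ux {H B : ℝ} (hH : 0 < H) (hB0 : 0 < B) (hB1 : B < 1) (s : ℝ) :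
    HasDerivAt (ux H B) (B * uC H s / Real.sqrt (uQ H B s)) s := by
  have hQ : HasDerivAt (uQ H B) (2 * B * (uC H s * H)) s :=
    ((hasDerivAt_uS H s).const_mul (2 * B)).const_add (1 + B ^ 2)
  have hsq : HasDerivAt (fun s => Real.sqrt (uQ H B s))
      (2 * B * (uC H s * H) / (2 * Real.sqrt (uQ H B s))) s :=
    hQ.sqrt (uQ_pos hB0 hB1 s).ne'
  have h := hsq.const_mul (1 / H)
  have hs : Real.sqrt (uQ H B s) ≠ 0 := (Real.sqrt_pos.2 (uQ_pos hB0 hB1 s)).ne'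
  have : ux H B = fun s => (1 / H) * Real.sqrt (uQ H B s) := by
    funext s; simp [ux, uQ, uS]
  rw [this]
  refine h.congr_deriv ?_
  field_simp [hH.ne']

lemma continuous_uf {H B : ℝ} (hB0 : 0 < B) (hB1 : B < 1) : Continuous (uf H B) := by
  apply Continuous.div
  · continuity
  · continuity
  · intro t
    have h1 := Real.neg_one_le_sin (H * t)
    refine (Real.sqrt_pos.2 ?_).ne'
    nlinarith [sq_nonneg (1 - B)]

lemma hasDerivAt_uz {H B : ℝ} (hH : 0 < H) (hB0 : 0 < B) (hB1 : B < 1) (s : ℝ) :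
    HasDerivAt (uz H B) ((1 + B * uS H s) / Real.sqrt (uQ H B s)) s := by
  set c : ℝ := 3 * π / (2 * H) with hc
  have hfc := continuous_uf (H := H) hB0 hB1
  have hF : HasDerivAt (fun y => ∫ t in c..y, uf H B t) (uf H B (s + c)) (s + c) :=
    intervalIntegral.integral_hasDerivAt_right (hfc.intervalIntegrable _ _)
      hfc.aestronglyMeasurable.stronglyMeasurableAtFilter hfc.continuousAt
  have hcomp : HasDerivAt (fun s => ∫ t in c..(s + c), uf H B t) (uf H B (s + c) * 1) s :=
    by have := hF.comp s ((hasDerivAt_id s).add_const c); exact this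
  have heq : uz H B = fun s => ∫ t in c..(s + c), uf H B t := by
    funext s; simp [uz, uf, hc]
  rw [heq]
  have hHs : H * (s + c) = H * s + 3 * π / 2 := by
    rw [hc]; field_simp
  convert hcomp using 1
  simp [uf, uS, uQ, hHs]

lemma ug_eq {H B : ℝ} (hH : 0 < H) (hB0 : 0 < B) (hB1 : B < 1) (s : ℝ) :
    ug H B s = ux H B s - (B * uC H s / (1 + B * uS H s)) * uz H B s := by
  rw [ug, (hasDerivAt_ux hH hB0 hB1 s).deriv, (hasDerivAt_uz hH hB0 hB1 s).deriv]
  have hsq : Real.sqrt (uQ H B s) ≠ 0 := (Real.sqrt_pos.2 (uQ_pos hB0 hB1 s)).ne'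
  have hd : (1 + B * uS H s) ≠ 0 := (uden_pos hB0 hB1 s).ne'
  congr 2
  field_simp

lemma hasDerivAt_ug {H B : ℝ} (hH : 0 < H) (hB0 : 0 < B) (hB1 : B < 1) (s : ℝ) :
    HasDerivAt (ug H B) (B * H * (uS H s + B) * uz H B s / (1 + B * uS H s) ^ 2) s := by
  have hfun : ug H B = fun s => ux H B s - (B * uC H s / (1 + B * uS H s)) * uz H B s :=
    funext (ug_eq hH hB0 hB1)
  rw [hfun]
  have hd : (1 + B * uS H s) ≠ 0 := (uden_pos hB0 hB1 s).ne'
  have hsq : Real.sqrt (uQ H B s) ≠ 0 := (Real.sqrt_pos.2 (uQ_pos hB0 hB1 s)).ne'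
  have hr : HasDerivAt (fun s => B * uC H s / (1 + B * uS H s))
      ((B * (-(uS H s) * H) * (1 + B * uS H s) - B * uC H s * (B * (uC H s * H))) /
        (1 + B * uS H s) ^ 2) s :=
    ((hasDerivAt_uC H s).const_mul B).div
      (((hasDerivAt_uS H s).const_mul B).const_add 1) hd
  have hsc : uS H s ^ 2 + uC H s ^ 2 = 1 := Real.sin_sq_add_cos_sq _
  have key : B * (-(uS H s) * H) * (1 + B * uS H s) - B * uC H s * (B * (uC H s * H)) =
      -(B * H * (uS H s + B)) := by linear_combination (-(B ^ 2 * H)) * hsc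
  rw [key] at hr
  have h := (hasDerivAt_ux hH hB0 hB1 s).sub (hr.mul (hasDerivAt_uz hH hB0 hB1 s))
  refine h.congr_deriv ?_
  field_simp [hH.ne']
  ring

lemma uS_eq (H s : ℝ) : uS H s = -Real.cos (H * s) := by
  have h : H * s + 3 * π / 2 = (H * s + π / 2) + π := by ring
  rw [uS, h, Real.sin_add_pi, Real.sin_add_pi_div_two]

lemma uC_eq (H s : ℝ) : uC H s = Real.sin (H * s) := by
  have h : H * s + 3 * π / 2 = (H * s + π / 2) + π := by ring
  rw [uC, h, Real.cos_add_pi, Real.cos_add_pi_div_two, neg_neg]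


/-- If the unduloid (`H > 0`, `0 < B < 1`) satisfies `z(s₀) < z₀ = (1−B²)/(HB)`, then
`g(s) > 0` for all `s ∈ (0, s₀)`. -/
theorem stmt11 (H B : ℝ) (hH : 0 < H) (hB0 : 0 < B) (hB1 : B < 1)
    (hzs₀ : uz H B (us₀ H B) < (1 - B ^ 2) / (H * B)) :
    ∀ s ∈ Ioo 0 (us₀ H B), 0 < ug H B s := by
  set s₁ : ℝ := Real.arccos B / H with hs₁def
  have hs₁pos : 0 < s₁ := div_pos (Real.arccos_pos.2 hB1) hH
  have hHs₁ : H * s₁ = Real.arccos B := by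
    rw [hs₁def]; field_simp
  have hHs₀ : H * us₀ H B = 3 * π / 2 - Real.arcsin B := by
    rw [us₀, Real.arcsin_neg]; field_simp; ring
  have harcsinpos : 0 < Real.arcsin B := Real.arcsin_pos.2 hB0
  have hs₁lt : s₁ < us₀ H B := by
    rw [← mul_lt_mul_iff_right₀ hH, hHs₁, hHs₀, Real.arccos_eq_pi_div_two_sub_arcsin]
    have := Real.pi_pos; linarith
  -- z strictly monotone, z 0 = 0
  have huzmono : StrictMono (uz H B) := by
    apply strictMono_of_deriv_pos
    intro s
    rw [(hasDerivAt_uz hH hB0 hB1 s).deriv]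
    exact div_pos (uden_pos hB0 hB1 s) (Real.sqrt_pos.2 (uQ_pos hB0 hB1 s))
  have huz0 : uz H B 0 = 0 := by simp [uz]
  have huzpos : ∀ s : ℝ, 0 < s → 0 < uz H B s := by
    intro s hs; rw [← huz0]; exact huzmono hs
  -- value at s₁
  have hS₁ : uS H s₁ = -B := by
    rw [uS_eq, hHs₁, Real.cos_arccos (by linarith) hB1.le]
  have hC₁ : uC H s₁ = Real.sqrt (1 - B ^ 2) := by
    rw [uC_eq, hHs₁, Real.sin_arccos]
  have huzs₁ : uz H B s₁ < (1 - B ^ 2) / (H * B) := (huzmono hs₁lt).trans hzs₀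
  have hg₁ : 0 < ug H B s₁ := by
    rw [ug_eq hH hB0 hB1, hS₁, hC₁]
    have hB2 : (0:ℝ) < 1 - B ^ 2 := by nlinarith
    set u : ℝ := Real.sqrt (1 - B ^ 2) with hu
    have hupos : 0 < u := Real.sqrt_pos.2 hB2
    have hu2 : u ^ 2 = 1 - B ^ 2 := Real.sq_sqrt hB2.le
    have hux₁ : ux H B s₁ = (1 / H) * u := by
      have : uQ H B s₁ = 1 - B ^ 2 := by rw [uQ, hS₁]; ring
      have := this
      rw [show ux H B s₁ = (1 / H) * Real.sqrt (uQ H B s₁) by simp [ux, uQ, uS], this]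
    rw [hux₁]
    have hden : 1 + B * (-B) = 1 - B ^ 2 := by ring
    rw [hden]
    rw [sub_pos, div_mul_eq_mul_div, div_lt_iff₀ hB2]
    calc B * u * uz H B s₁ < B * u * ((1 - B ^ 2) / (H * B)) := by
          apply mul_lt_mul_of_pos_left huzs₁ (by positivity)
      _ = 1 / H * u * (1 - B ^ 2) := by field_simp
  -- differentiability / continuity of g
  have hdiff : Differentiable ℝ (ug H B) := fun s => (hasDerivAt_ug hH hB0 hB1 s).differentiableAt
  have hcont : Continuous (ug H B) := hdiff.continuous
  -- g strictly decreasing on [0, s₁]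
  have harccos_mem : Real.arccos B ∈ Icc 0 π := ⟨Real.arccos_nonneg B, Real.arccos_le_pi B⟩
  have hanti : StrictAntiOn (ug H B) (Icc 0 s₁) := by
    apply strictAntiOn_of_deriv_neg (convex_Icc _ _) hcont.continuousOn
    intro x hx
    rw [interior_Icc] at hx
    rw [(hasDerivAt_ug hH hB0 hB1 x).deriv]
    have hxpos : 0 < x := hx.1
    have hHx : H * x < Real.arccos B := by
      rw [← hHs₁]; exact (mul_lt_mul_iff_right₀ hH).2 hx.2
    have hcosgt : B < Real.cos (H * x) := by
      have := Real.strictAntiOn_cos ⟨by positivity, hHx.le.trans harccos_mem.2⟩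
        harccos_mem hHx
      rwa [Real.cos_arccos (by linarith) hB1.le] at this
    have hSx : uS H x + B < 0 := by rw [uS_eq]; linarith
    have hZ : 0 < uz H B x := huzpos x hxpos
    apply div_neg_of_neg_of_pos
    · nlinarith [mul_pos (mul_pos hB0 hH) hZ]
    · have := uden_pos (H := H) hB0 hB1 x; positivity
  -- g strictly increasing on [s₁, s₀]
  have hmono : StrictMonoOn (ug H B) (Icc s₁ (us₀ H B)) := by
    apply strictMonoOn_of_deriv_pos (convex_Icc _ _) hcont.continuousOn
    intro x hx
    rw [interior_Icc] at hx
    rw [(hasDerivAt_ug hH hB0 hB1 x).deriv]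
    have hxpos : 0 < x := hs₁pos.trans hx.1
    have hHx1 : Real.arccos B < H * x := by rw [← hHs₁]; exact (mul_lt_mul_iff_right₀ hH).2 hx.1
    have hHx0 : H * x < 3 * π / 2 - Real.arcsin B := by
      rw [← hHs₀]; exact (mul_lt_mul_iff_right₀ hH).2 hx.2
    have hcoslt : Real.cos (H * x) < B := by
      rcases le_or_gt (H * x) π with hle | hgt
      · have := Real.strictAntiOn_cos harccos_mem ⟨by positivity, hle⟩ hHx1
        rwa [Real.cos_arccos (by linarith) hB1.le] at this
      · have h2 : Real.cos (H * x) < 0 := by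
          apply Real.cos_neg_of_pi_div_two_lt_of_lt
          · have := Real.pi_pos; linarith
          · linarith
        linarith
    have hSx : 0 < uS H x + B := by rw [uS_eq]; linarith
    have hZ : 0 < uz H B x := huzpos x hxpos
    apply div_pos
    · positivity
    · have := uden_pos (H := H) hB0 hB1 x; positivity
  -- conclude
  intro s hs
  rcases lt_trichotomy s s₁ with hlt | heq | hgt
  · have := hanti ⟨hs.1.le, hlt.le⟩ ⟨hs₁pos.le, le_refl _⟩ hlt
    linarith
  · rwa [heq]
  · have := hmono ⟨le_refl _, hs₁lt.le⟩ ⟨hgt.le, hs.2.le⟩ hgt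
    linarith
end

section
/- For the unduloid with parameters 0 < B < 1 and H > 0, consider the sequence of parameters tₙ = −(1/H)sin⁻¹(−B) + (4n−1)π/(2H), n ∈ ℕ, at which sin(Htₙ + 3π/2) = −B. At these points x(tₙ) = √(1−B²)/H, x'(tₙ) = −B, z'(tₙ) = √(1−B²), x''(tₙ) = 0, and the Hessian eigenvalues of |p|²/2 restricted to the surface are λ₁(tₙ) = 1 and λ₂(tₙ) = BH(B/H − z(tₙ)). Since z(tₙ) → ∞, there exists n₀ such that λ₂(tₙ) < 0 for all n ≥ n₀, and hence the strict reverse pinching |Φ|²⟨p,N⟩² > ½(2 + H⟨p,N⟩)² holds at the corresponding points for n ≥ n₀. -/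
open Real Set

/-- The parameter sequence `tₙ = −(1/H)sin⁻¹(−B) + (4n−1)π/(2H)` on the unduloid. -/
noncomputable def ut (H B : ℝ) (n : ℕ) : ℝ :=
  -(1 / H) * Real.arcsin (-B) + (4 * (n : ℝ) - 1) * π / (2 * H)

lemma myf_pos {B : ℝ} (hB0 : 0 < B) (hB1 : B < 1) (θ : ℝ) :
    0 < 1 + B ^ 2 + 2 * B * Real.sin θ := by
  nlinarith [Real.neg_one_le_sin θ, Real.sin_le_one θ, sq_nonneg (1 - B)]

lemma mysqrt_pos {B : ℝ} (hB0 : 0 < B) (hB1 : B < 1) (θ : ℝ) :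
    0 < Real.sqrt (1 + B ^ 2 + 2 * B * Real.sin θ) :=
  Real.sqrt_pos.2 (myf_pos hB0 hB1 θ)

lemma hg_cont {H B : ℝ} (hB0 : 0 < B) (hB1 : B < 1) :
    Continuous (fun t => (1 + B * Real.sin (H * t)) /
      Real.sqrt (1 + B ^ 2 + 2 * B * Real.sin (H * t))) := by
  apply Continuous.div
  · continuity
  · continuity
  · exact fun t => (mysqrt_pos hB0 hB1 (H * t)).ne'

lemma huz_deriv {H B : ℝ} (hH : 0 < H) (hB0 : 0 < B) (hB1 : B < 1) (s : ℝ) :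
    HasDerivAt (uz H B)
      ((1 + B * Real.sin (H * s + 3 * π / 2)) /
        Real.sqrt (1 + B ^ 2 + 2 * B * Real.sin (H * s + 3 * π / 2))) s := by
  have hg := hg_cont (H := H) hB0 hB1
  have hG := intervalIntegral.integral_hasDerivAt_right
    (hg.intervalIntegrable (3 * π / (2 * H)) (s + 3 * π / (2 * H)))
    (hg.stronglyMeasurableAtFilter _ _) hg.continuousAt
  have h2 : HasDerivAt (fun u : ℝ => u + 3 * π / (2 * H)) 1 s :=
    (hasDerivAt_id s).add_const _
  have h3 := hG.comp s h2
  have harg : H * (s + 3 * π / (2 * H)) = H * s + 3 * π / 2 := by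
    field_simp
  simp only [Function.comp_def, harg, mul_one] at h3
  exact h3

lemma hF_deriv {H B : ℝ} (s : ℝ) :
    HasDerivAt (fun s => 1 + B ^ 2 + 2 * B * Real.sin (H * s + 3 * π / 2))
      (2 * B * (Real.cos (H * s + 3 * π / 2) * H)) s := by
  have h1 : HasDerivAt (fun s : ℝ => H * s + 3 * π / 2) H s := by
    simpa using ((hasDerivAt_id s).const_mul H).add_const (3 * π / 2)
  have h2 := (Real.hasDerivAt_sin (H * s + 3 * π / 2)).comp s h1
  simpa [mul_comm, mul_assoc] using (h2.const_mul (2 * B)).const_add (1 + B ^ 2)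

lemma hden_deriv {H B : ℝ} (hB0 : 0 < B) (hB1 : B < 1) (s : ℝ) :
    HasDerivAt (fun s => Real.sqrt (1 + B ^ 2 + 2 * B * Real.sin (H * s + 3 * π / 2)))
      (2 * B * (Real.cos (H * s + 3 * π / 2) * H) /
        (2 * Real.sqrt (1 + B ^ 2 + 2 * B * Real.sin (H * s + 3 * π / 2)))) s :=
  (hF_deriv s).sqrt (ne_of_gt (myf_pos hB0 hB1 _))

lemma hP_deriv0 {H B : ℝ} (hB0 : 0 < B) (hB1 : B < 1) (s : ℝ)
    (hsin : Real.sin (H * s + 3 * π / 2) = -B) :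
    HasDerivAt (fun s => B * Real.cos (H * s + 3 * π / 2) /
      Real.sqrt (1 + B ^ 2 + 2 * B * Real.sin (H * s + 3 * π / 2))) 0 s := by
  have h1 : HasDerivAt (fun s : ℝ => H * s + 3 * π / 2) H s := by
    simpa using ((hasDerivAt_id s).const_mul H).add_const (3 * π / 2)
  have hnum : HasDerivAt (fun s => B * Real.cos (H * s + 3 * π / 2))
      (B * (-Real.sin (H * s + 3 * π / 2) * H)) s := by
    simpa [mul_comm, mul_assoc] using
      (((Real.hasDerivAt_cos (H * s + 3 * π / 2)).comp s h1).const_mul B)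
  have hden := hden_deriv (H := H) hB0 hB1 s
  have hdne := (mysqrt_pos hB0 hB1 (H * s + 3 * π / 2)).ne'
  have h := hnum.div hden hdne
  refine h.congr_deriv (Eq.symm ?_)
  have hFval : 1 + B ^ 2 + 2 * B * Real.sin (H * s + 3 * π / 2) = 1 - B ^ 2 := by
    rw [hsin]; ring
  have hcos2 : Real.cos (H * s + 3 * π / 2) ^ 2 = 1 - B ^ 2 := by
    have := Real.sin_sq_add_cos_sq (H * s + 3 * π / 2)
    rw [hsin] at this; nlinarith
  have hd2 : Real.sqrt (1 - B ^ 2) ^ 2 = 1 - B ^ 2 :=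
    Real.sq_sqrt (by nlinarith)
  have hdpos : 0 < Real.sqrt (1 - B ^ 2) :=
    Real.sqrt_pos.2 (by nlinarith)
  rw [hFval, hsin]
  set c := Real.cos (H * s + 3 * π / 2) with hc
  set d := Real.sqrt (1 - B ^ 2) with hd
  field_simp
  linear_combination (B ^ 2 * H) * hcos2 - (B ^ 2 * H) * hd2

lemma hQ_deriv0 {H B : ℝ} (hB0 : 0 < B) (hB1 : B < 1) (s : ℝ)
    (hsin : Real.sin (H * s + 3 * π / 2) = -B) :
    HasDerivAt (fun s => (1 + B * Real.sin (H * s + 3 * π / 2)) /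
      Real.sqrt (1 + B ^ 2 + 2 * B * Real.sin (H * s + 3 * π / 2))) 0 s := by
  have h1 : HasDerivAt (fun s : ℝ => H * s + 3 * π / 2) H s := by
    simpa using ((hasDerivAt_id s).const_mul H).add_const (3 * π / 2)
  have hnum : HasDerivAt (fun s => 1 + B * Real.sin (H * s + 3 * π / 2))
      (B * (Real.cos (H * s + 3 * π / 2) * H)) s := by
    simpa [mul_comm, mul_assoc] using
      ((((Real.hasDerivAt_sin (H * s + 3 * π / 2)).comp s h1).const_mul B).const_add 1)
  have hden := hden_deriv (H := H) hB0 hB1 s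
  have hdne := (mysqrt_pos hB0 hB1 (H * s + 3 * π / 2)).ne'
  have h := hnum.div hden hdne
  refine h.congr_deriv (Eq.symm ?_)
  have hFval : 1 + B ^ 2 + 2 * B * Real.sin (H * s + 3 * π / 2) = 1 - B ^ 2 := by
    rw [hsin]; ring
  have hd2 : Real.sqrt (1 - B ^ 2) ^ 2 = 1 - B ^ 2 :=
    Real.sq_sqrt (by nlinarith)
  have hdpos : 0 < Real.sqrt (1 - B ^ 2) :=
    Real.sqrt_pos.2 (by nlinarith)
  rw [hFval, hsin]
  set c := Real.cos (H * s + 3 * π / 2) with hc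
  set d := Real.sqrt (1 - B ^ 2) with hd
  field_simp
  linear_combination (-B * c * H) * hd2

lemma theta_eq {H B : ℝ} (hH : 0 < H) (n : ℕ) :
    H * ut H B n + 3 * π / 2 = Real.arcsin B + π + n * (2 * π) := by
  unfold ut
  rw [Real.arcsin_neg]
  field_simp
  ring

lemma sin_tn {H B : ℝ} (hH : 0 < H) (hB0 : 0 < B) (hB1 : B < 1) (n : ℕ) :
    Real.sin (H * ut H B n + 3 * π / 2) = -B := by
  rw [theta_eq hH, Real.sin_add_nat_mul_two_pi, Real.sin_add_pi,
    Real.sin_arcsin (by linarith) (by linarith)]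

lemma cos_tn {H B : ℝ} (hH : 0 < H) (hB0 : 0 < B) (hB1 : B < 1) (n : ℕ) :
    Real.cos (H * ut H B n + 3 * π / 2) = -Real.sqrt (1 - B ^ 2) := by
  rw [theta_eq hH, Real.cos_add_nat_mul_two_pi, Real.cos_add_pi, Real.cos_arcsin]

lemma hux_deriv {H B : ℝ} (hH : 0 < H) (hB0 : 0 < B) (hB1 : B < 1) (s : ℝ) :
    HasDerivAt (ux H B)
      (B * Real.cos (H * s + 3 * π / 2) /
        Real.sqrt (1 + B ^ 2 + 2 * B * Real.sin (H * s + 3 * π / 2))) s := by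
  have h := ((hF_deriv (H := H) (B := B) s).sqrt
      (ne_of_gt (myf_pos hB0 hB1 _))).const_mul (1 / H)
  refine h.congr_deriv (Eq.symm ?_)
  have hs := (mysqrt_pos hB0 hB1 (H * s + 3 * π / 2)).ne'
  rw [eq_comm]
  rw [show 2 * B * (Real.cos (H * s + 3 * π / 2) * H) = H * (2 * (B * Real.cos (H * s + 3 * π / 2))) from by ring,
    mul_div_assoc H, ← mul_assoc, one_div, inv_mul_cancel₀ hH.ne', one_mul,
    mul_div_mul_left _ _ (two_ne_zero : (2:ℝ) ≠ 0)]

lemma deriv_ux {H B : ℝ} (hH : 0 < H) (hB0 : 0 < B) (hB1 : B < 1) :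
    deriv (ux H B) = fun s => B * Real.cos (H * s + 3 * π / 2) /
      Real.sqrt (1 + B ^ 2 + 2 * B * Real.sin (H * s + 3 * π / 2)) :=
  funext fun s => (hux_deriv hH hB0 hB1 s).deriv

lemma deriv_uz {H B : ℝ} (hH : 0 < H) (hB0 : 0 < B) (hB1 : B < 1) :
    deriv (uz H B) = fun s => (1 + B * Real.sin (H * s + 3 * π / 2)) /
      Real.sqrt (1 + B ^ 2 + 2 * B * Real.sin (H * s + 3 * π / 2)) :=
  funext fun s => (huz_deriv hH hB0 hB1 s).deriv

section vals
variable {H B : ℝ}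

lemma Ftn {H B : ℝ} (hH : 0 < H) (hB0 : 0 < B) (hB1 : B < 1) (n : ℕ) :
    1 + B ^ 2 + 2 * B * Real.sin (H * ut H B n + 3 * π / 2) = 1 - B ^ 2 := by
  rw [sin_tn hH hB0 hB1]; ring

lemma ux_tn (hH : 0 < H) (hB0 : 0 < B) (hB1 : B < 1) (n : ℕ) :
    ux H B (ut H B n) = Real.sqrt (1 - B ^ 2) / H := by
  rw [ux, Ftn hH hB0 hB1, one_div, inv_mul_eq_div]

lemma dux_tn (hH : 0 < H) (hB0 : 0 < B) (hB1 : B < 1) (n : ℕ) :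
    deriv (ux H B) (ut H B n) = -B := by
  rw [deriv_ux hH hB0 hB1]
  simp only
  rw [Ftn hH hB0 hB1, cos_tn hH hB0 hB1]
  have hd : (0:ℝ) < Real.sqrt (1 - B ^ 2) := Real.sqrt_pos.2 (by nlinarith)
  field_simp

lemma duz_tn (hH : 0 < H) (hB0 : 0 < B) (hB1 : B < 1) (n : ℕ) :
    deriv (uz H B) (ut H B n) = Real.sqrt (1 - B ^ 2) := by
  rw [deriv_uz hH hB0 hB1]
  simp only
  rw [Ftn hH hB0 hB1, sin_tn hH hB0 hB1]
  rw [show 1 + B * -B = 1 - B ^ 2 from by ring]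
  exact Real.div_sqrt

lemma ddux_tn (hH : 0 < H) (hB0 : 0 < B) (hB1 : B < 1) (n : ℕ) :
    deriv (deriv (ux H B)) (ut H B n) = 0 := by
  rw [deriv_ux hH hB0 hB1]
  exact (hP_deriv0 hB0 hB1 _ (sin_tn hH hB0 hB1 n)).deriv

lemma dduz_tn (hH : 0 < H) (hB0 : 0 < B) (hB1 : B < 1) (n : ℕ) :
    deriv (deriv (uz H B)) (ut H B n) = 0 := by
  rw [deriv_uz hH hB0 hB1]
  exact (hQ_deriv0 hB0 hB1 _ (sin_tn hH hB0 hB1 n)).deriv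

end vals

lemma g_ge {H B : ℝ} (hB0 : 0 < B) (hB1 : B < 1) (t : ℝ) :
    (1 - B) / (1 + B) ≤ (1 + B * Real.sin (H * t)) /
      Real.sqrt (1 + B ^ 2 + 2 * B * Real.sin (H * t)) := by
  have hd : 0 < Real.sqrt (1 + B ^ 2 + 2 * B * Real.sin (H * t)) :=
    mysqrt_pos hB0 hB1 _
  have hle : Real.sqrt (1 + B ^ 2 + 2 * B * Real.sin (H * t)) ≤ 1 + B := by
    rw [show (1:ℝ) + B = Real.sqrt ((1 + B) ^ 2) from
      (Real.sqrt_sq (by linarith)).symm]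
    apply Real.sqrt_le_sqrt
    nlinarith [Real.sin_le_one (H * t)]
  have hnum : (1:ℝ) - B ≤ 1 + B * Real.sin (H * t) := by
    nlinarith [Real.neg_one_le_sin (H * t)]
  calc (1 - B) / (1 + B) ≤ (1 - B) / Real.sqrt (1 + B ^ 2 + 2 * B * Real.sin (H * t)) := by
        apply div_le_div_of_nonneg_left (by linarith) hd hle
    _ ≤ (1 + B * Real.sin (H * t)) / Real.sqrt (1 + B ^ 2 + 2 * B * Real.sin (H * t)) := by
        gcongr

lemma uz_ge {H B : ℝ} (hH : 0 < H) (hB0 : 0 < B) (hB1 : B < 1) (s : ℝ) (hs : 0 ≤ s) :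
    (1 - B) / (1 + B) * s ≤ uz H B s := by
  have hg := hg_cont (H := H) hB0 hB1
  have h1 : (1 - B) / (1 + B) * s
      = ∫ _ in (3 * π / (2 * H))..(s + 3 * π / (2 * H)), (1 - B) / (1 + B) := by
    rw [intervalIntegral.integral_const]
    simp [mul_comm]
  rw [uz, h1]
  apply intervalIntegral.integral_mono_on (by linarith)
    intervalIntegrable_const (hg.intervalIntegrable _ _)
  intro t _
  exact g_ge hB0 hB1 t

lemma tn_ge {H B : ℝ} (hH : 0 < H) (hB0 : 0 < B) {n : ℕ} (hn : 1 ≤ n) :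
    (n : ℝ) * π / H ≤ ut H B n := by
  have h1 : (1:ℝ) ≤ n := Nat.one_le_cast.2 hn
  have harc : 0 ≤ Real.arcsin B := Real.arcsin_nonneg.2 hB0.le
  have hπ := Real.pi_pos
  unfold ut
  rw [Real.arcsin_neg]
  have key : (n:ℝ) * π / H ≤ (4 * n - 1) * π / (2 * H) := by
    rw [div_le_div_iff₀ (by positivity) (by positivity)]
    nlinarith [mul_pos hπ hH, mul_le_mul_of_nonneg_right
      (by linarith : (1:ℝ) ≤ 2 * (n:ℝ) - 1) (le_of_lt (mul_pos hπ hH))]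
  refine le_trans key (le_add_of_nonneg_left ?_)
  have : -(1 / H) * -Real.arcsin B = Real.arcsin B / H := by ring
  rw [this]
  exact div_nonneg harc hH.le

lemma uz_tn_tendsto {H B : ℝ} (hH : 0 < H) (hB0 : 0 < B) (hB1 : B < 1) :
    Filter.Tendsto (fun n : ℕ => uz H B (ut H B n)) Filter.atTop Filter.atTop := by
  have hc : 0 < (1 - B) / (1 + B) * (π / H) :=
    mul_pos (div_pos (by linarith) (by linarith)) (div_pos Real.pi_pos hH)
  have htend : Filter.Tendsto
      (fun n : ℕ => (1 - B) / (1 + B) * (π / H) * (n : ℝ)) Filter.atTop Filter.atTop :=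
    (tendsto_natCast_atTop_atTop (R := ℝ)).const_mul_atTop hc
  apply Filter.tendsto_atTop_mono' _ _ htend
  filter_upwards [Filter.eventually_ge_atTop 1] with n hn
  have htn0 : (0:ℝ) ≤ (n:ℝ) * π / H := by positivity
  have h2 := tn_ge hH hB0 hn
  have hcc : (0:ℝ) ≤ (1 - B) / (1 + B) :=
    le_of_lt (div_pos (by linarith) (by linarith))
  calc (1 - B) / (1 + B) * (π / H) * (n : ℝ)
      = (1 - B) / (1 + B) * ((n:ℝ) * π / H) := by ring
    _ ≤ (1 - B) / (1 + B) * ut H B n := by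
        exact mul_le_mul_of_nonneg_left h2 hcc
    _ ≤ uz H B (ut H B n) := uz_ge hH hB0 hB1 _ (le_trans htn0 h2)

/-- At the points `tₙ` of the unduloid (`H > 0`, `0 < B < 1`) one has
`sin(Htₙ + 3π/2) = −B`, `x(tₙ) = √(1−B²)/H`, `x'(tₙ) = −B`, `z'(tₙ) = √(1−B²)`,
`x''(tₙ) = 0`, and, with `k₁ = x'z'' − x''z'`, `k₂ = z'/x`, `w = x'z − xz'`,
the Hessian eigenvalues are `λ₁(tₙ) = 1 + k₁w = 1` and
`λ₂(tₙ) = 1 + k₂w = BH(B/H − z(tₙ))`. Since `z(tₙ) → ∞`, for all large `n` one has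
`λ₂(tₙ) < 0` and the strict reverse pinching `|Φ|²⟨p,N⟩² > ½(2 + H⟨p,N⟩)²` holds. -/
theorem stmt16 (H B : ℝ) (hH : 0 < H) (hB0 : 0 < B) (hB1 : B < 1) :
    (∀ n : ℕ,
      Real.sin (H * ut H B n + 3 * π / 2) = -B ∧
      ux H B (ut H B n) = Real.sqrt (1 - B ^ 2) / H ∧
      deriv (ux H B) (ut H B n) = -B ∧
      deriv (uz H B) (ut H B n) = Real.sqrt (1 - B ^ 2) ∧
      deriv (deriv (ux H B)) (ut H B n) = 0 ∧
      (1 + (deriv (ux H B) (ut H B n) * deriv (deriv (uz H B)) (ut H B n) -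
            deriv (deriv (ux H B)) (ut H B n) * deriv (uz H B) (ut H B n)) *
           (deriv (ux H B) (ut H B n) * uz H B (ut H B n) -
            ux H B (ut H B n) * deriv (uz H B) (ut H B n)) = 1) ∧
      (1 + (deriv (uz H B) (ut H B n) / ux H B (ut H B n)) *
           (deriv (ux H B) (ut H B n) * uz H B (ut H B n) -
            ux H B (ut H B n) * deriv (uz H B) (ut H B n)) =
        B * H * (B / H - uz H B (ut H B n)))) ∧
    Filter.Tendsto (fun n : ℕ => uz H B (ut H B n)) Filter.atTop Filter.atTop ∧
    ∃ n₀ : ℕ, ∀ n ≥ n₀,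
      (1 + (deriv (uz H B) (ut H B n) / ux H B (ut H B n)) *
           (deriv (ux H B) (ut H B n) * uz H B (ut H B n) -
            ux H B (ut H B n) * deriv (uz H B) (ut H B n)) < 0) ∧
      ((deriv (ux H B) (ut H B n) * deriv (deriv (uz H B)) (ut H B n) -
          deriv (deriv (ux H B)) (ut H B n) * deriv (uz H B) (ut H B n) -
          deriv (uz H B) (ut H B n) / ux H B (ut H B n)) ^ 2 / 2 *
        (deriv (ux H B) (ut H B n) * uz H B (ut H B n) -
          ux H B (ut H B n) * deriv (uz H B) (ut H B n)) ^ 2 >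
       (1 / 2) * (2 + (deriv (ux H B) (ut H B n) * deriv (deriv (uz H B)) (ut H B n) -
          deriv (deriv (ux H B)) (ut H B n) * deriv (uz H B) (ut H B n) +
          deriv (uz H B) (ut H B n) / ux H B (ut H B n)) *
        (deriv (ux H B) (ut H B n) * uz H B (ut H B n) -
          ux H B (ut H B n) * deriv (uz H B) (ut H B n))) ^ 2) := by
  have h1B2 : (0:ℝ) < 1 - B ^ 2 := by nlinarith
  have hd2 : Real.sqrt (1 - B ^ 2) ^ 2 = 1 - B ^ 2 := Real.sq_sqrt h1B2.le
  have hdpos : 0 < Real.sqrt (1 - B ^ 2) := Real.sqrt_pos.2 h1B2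
  have hlam2 : ∀ n : ℕ,
      1 + (deriv (uz H B) (ut H B n) / ux H B (ut H B n)) *
           (deriv (ux H B) (ut H B n) * uz H B (ut H B n) -
            ux H B (ut H B n) * deriv (uz H B) (ut H B n)) =
        B * H * (B / H - uz H B (ut H B n)) := by
    intro n
    rw [dux_tn hH hB0 hB1, duz_tn hH hB0 hB1, ux_tn hH hB0 hB1]
    set z := uz H B (ut H B n) with hz
    set d := Real.sqrt (1 - B ^ 2) with hd
    field_simp
    linear_combination (-1 : ℝ) * hd2
  refine ⟨fun n => ⟨sin_tn hH hB0 hB1 n, ux_tn hH hB0 hB1 n, dux_tn hH hB0 hB1 n,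
    duz_tn hH hB0 hB1 n, ddux_tn hH hB0 hB1 n, ?_, hlam2 n⟩,
    uz_tn_tendsto hH hB0 hB1, ?_⟩
  · rw [ddux_tn hH hB0 hB1, dduz_tn hH hB0 hB1]
    ring
  · obtain ⟨n₀, hn₀⟩ := Filter.eventually_atTop.1
      (Filter.Tendsto.eventually_ge_atTop (uz_tn_tendsto hH hB0 hB1) (B / H + 1))
    refine ⟨n₀, fun n hn => ?_⟩
    have hzn : B / H + 1 ≤ uz H B (ut H B n) := hn₀ n hn
    have hneg : 1 + (deriv (uz H B) (ut H B n) / ux H B (ut H B n)) *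
           (deriv (ux H B) (ut H B n) * uz H B (ut H B n) -
            ux H B (ut H B n) * deriv (uz H B) (ut H B n)) < 0 := by
      rw [hlam2 n]
      exact mul_neg_of_pos_of_neg (mul_pos hB0 hH) (by linarith)
    refine ⟨hneg, ?_⟩
    rw [ddux_tn hH hB0 hB1, dduz_tn hH hB0 hB1]
    set v := deriv (uz H B) (ut H B n) / ux H B (ut H B n) with hv
    set w := deriv (ux H B) (ut H B n) * uz H B (ut H B n) -
      ux H B (ut H B n) * deriv (uz H B) (ut H B n) with hw
    simp only [mul_zero, zero_mul, sub_zero, zero_sub, zero_add, add_zero]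
    clear_value v w
    nlinarith [hneg]
end
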